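/- Let C be a premodel category in which every cofibration with cofibrant domain and fibrant codomain A → B admits a relative strong cylinder object B ⊔_A B → I_A B → B with the first inclusion B → I_A B an acyclic cofibration. Then every core cofibration i : A → B (cofibrant domain, arbitrary codomain) admits a relative weak cylinder object, obtained by composing i with a fibrant replacement B → B^fib (anodyne cofibration) and taking the relative strong cylinder of the composite. -/

import Mathlib

open CategoryTheory CategoryTheory.Limits

universe v u

/-- A premodel category structure on a complete and cocomplete category `C`:
two weak factorization systems (cofibrations, anodyne fibrations) and
(anodyne cofibrations, fibrations), with anodyne cofibrations ⊆ cofibrations. -/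
structure Premodel (C : Type u) [Category.{v} C] [HasLimits C] [HasColimits C] where
  Cof : MorphismProperty C
  AnCof : MorphismProperty C
  Fib : MorphismProperty C
  AnFib : MorphismProperty C
  anCof_le_cof : ∀ {X Y : C} (f : X ⟶ Y), AnCof f → Cof f
  cof_llp : ∀ {X Y A B : C} (f : X ⟶ Y) (g : A ⟶ B), Cof f → AnFib g → HasLiftingProperty f g
  cof_of_llp : ∀ {X Y : C} (f : X ⟶ Y),
    (∀ {A B : C} (g : A ⟶ B), AnFib g → HasLiftingProperty f g) → Cof f
  anFib_of_rlp : ∀ {X Y : C} (g : X ⟶ Y),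
    (∀ {A B : C} (f : A ⟶ B), Cof f → HasLiftingProperty f g) → AnFib g
  fact_cof_anFib : ∀ {X Y : C} (f : X ⟶ Y),
    ∃ (Z : C) (i : X ⟶ Z) (p : Z ⟶ Y), Cof i ∧ AnFib p ∧ i ≫ p = f
  anCof_llp : ∀ {X Y A B : C} (f : X ⟶ Y) (g : A ⟶ B), AnCof f → Fib g → HasLiftingProperty f g
  anCof_of_llp : ∀ {X Y : C} (f : X ⟶ Y),
    (∀ {A B : C} (g : A ⟶ B), Fib g → HasLiftingProperty f g) → AnCof f
  fib_of_rlp : ∀ {X Y : C} (g : X ⟶ Y),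
    (∀ {A B : C} (f : A ⟶ B), AnCof f → HasLiftingProperty f g) → Fib g
  fact_anCof_fib : ∀ {X Y : C} (f : X ⟶ Y),
    ∃ (Z : C) (i : X ⟶ Z) (p : Z ⟶ Y), AnCof i ∧ Fib p ∧ i ≫ p = f

namespace Premodel

variable {C : Type u} [Category.{v} C] [HasLimits C] [HasColimits C] (P : Premodel C)

/-- An object is fibrant if its map to the terminal object is a fibration. -/
def Fibrant (X : C) : Prop := P.Fib (terminal.from X)

/-- An object is cofibrant if the map from the initial object is a cofibration. -/
def Cofibrant (X : C) : Prop := P.Cof (initial.to X)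

/-- An acyclic cofibration: a cofibration with the left lifting property against
all fibrations between fibrant objects. -/
def AcyclicCof {X Y : C} (f : X ⟶ Y) : Prop :=
  P.Cof f ∧ ∀ {A B : C} (g : A ⟶ B), P.Fib g → P.Fibrant A → P.Fibrant B →
    HasLiftingProperty f g

/-- An acyclic fibration: a fibration with the right lifting property against
all cofibrations between cofibrant objects. -/
def AcyclicFib {X Y : C} (g : X ⟶ Y) : Prop :=
  P.Fib g ∧ ∀ {A B : C} (f : A ⟶ B), P.Cof f → P.Cofibrant A → P.Cofibrant B →
    HasLiftingProperty f g

end Premodel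

variable {C : Type u} [Category.{v} C] [HasLimits C] [HasColimits C]

/-- If in a premodel category every cofibration with cofibrant domain and fibrant codomain
admits a relative strong cylinder object, then every core cofibration admits a relative
weak cylinder object (obtained via a fibrant replacement of its codomain). -/
theorem weak_cylinder_from_strong (P : Premodel C)
    (hstrong : ∀ {A B : C} (i : A ⟶ B), P.Cof i → P.Cofibrant A → P.Fibrant B →
      ∃ (I : C) (c : pushout i i ⟶ I) (r : I ⟶ B),
        P.Cof c ∧ P.AcyclicCof (pushout.inl i i ≫ c) ∧
        c ≫ r = pushout.desc (𝟙 B) (𝟙 B) rfl) :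
    ∀ {A B : C} (i : A ⟶ B), P.Cof i → P.Cofibrant A →
      ∃ (I D : C) (c : pushout i i ⟶ I) (d : I ⟶ D) (e : B ⟶ D),
        P.Cof c ∧
        P.AcyclicCof (pushout.inl i i ≫ c) ∧
        P.AcyclicCof e ∧
        pushout.desc (𝟙 B) (𝟙 B) rfl ≫ e = c ≫ d := by
  intro A B i hi hA
  obtain ⟨Z, j, p, hj, hp, hjp⟩ := P.fact_anCof_fib (terminal.from B)
  have hZfib : P.Fibrant Z := by
    have hpt : p = terminal.from Z := Subsingleton.elim _ _
    rwa [Premodel.Fibrant, ← hpt]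
  have hjc : P.Cof j := P.anCof_le_cof j hj
  have hij : P.Cof (i ≫ j) := by
    apply P.cof_of_llp
    intro X Y g hg
    haveI := P.cof_llp i g hi hg
    haveI := P.cof_llp j g hjc hg
    infer_instance
  obtain ⟨I, c', r, hc', hacyc, hcr⟩ := hstrong (i ≫ j) hij hA hZfib
  have hcond : i ≫ j ≫ pushout.inl (i ≫ j) (i ≫ j) = i ≫ j ≫ pushout.inr (i ≫ j) (i ≫ j) := by
    rw [← Category.assoc, ← Category.assoc, pushout.condition]
  let φ : pushout i i ⟶ pushout (i ≫ j) (i ≫ j) :=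
    pushout.desc (j ≫ pushout.inl _ _) (j ≫ pushout.inr _ _) hcond
  have hφinl : pushout.inl i i ≫ φ = j ≫ pushout.inl (i ≫ j) (i ≫ j) := by
    exact pushout.inl_desc _ _ _
  have hφinr : pushout.inr i i ≫ φ = j ≫ pushout.inr (i ≫ j) (i ≫ j) := by
    exact pushout.inr_desc _ _ _
  have hφ : P.AnCof φ := by
    apply P.anCof_of_llp
    intro X Y g hg
    haveI := P.anCof_llp j g hj hg
    constructor
    intro u v sq
    have sq₁ : CommSq (pushout.inl i i ≫ u) j g (pushout.inl (i ≫ j) (i ≫ j) ≫ v) := by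
      constructor
      rw [Category.assoc, sq.w, ← Category.assoc, hφinl, Category.assoc]
    have sq₂ : CommSq (pushout.inr i i ≫ u) j g (pushout.inr (i ≫ j) (i ≫ j) ≫ v) := by
      constructor
      rw [Category.assoc, sq.w, ← Category.assoc, hφinr, Category.assoc]
    have hL : (i ≫ j) ≫ sq₁.lift = (i ≫ j) ≫ sq₂.lift := by
      rw [Category.assoc, Category.assoc, sq₁.fac_left, sq₂.fac_left,
        ← Category.assoc, ← Category.assoc, pushout.condition]
    refine ⟨⟨⟨pushout.desc sq₁.lift sq₂.lift hL, ?_, ?_⟩⟩⟩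
    · apply pushout.hom_ext
      · rw [← Category.assoc, hφinl, Category.assoc, pushout.inl_desc, sq₁.fac_left]
      · rw [← Category.assoc, hφinr, Category.assoc, pushout.inr_desc, sq₂.fac_left]
    · apply pushout.hom_ext
      · rw [← Category.assoc, pushout.inl_desc, sq₁.fac_right]
      · rw [← Category.assoc, pushout.inr_desc, sq₂.fac_right]
  refine ⟨I, Z, φ ≫ c', r, j, ?_, ?_, ?_, ?_⟩
  · -- Cof (φ ≫ c')
    apply P.cof_of_llp
    intro X Y g hg
    haveI := P.cof_llp φ g (P.anCof_le_cof φ hφ) hg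
    haveI := P.cof_llp c' g hc' hg
    infer_instance
  · -- AcyclicCof (pushout.inl i i ≫ (φ ≫ c'))
    have hrw : pushout.inl i i ≫ φ ≫ c' = j ≫ pushout.inl (i ≫ j) (i ≫ j) ≫ c' := by
      rw [← Category.assoc, hφinl, Category.assoc]
    constructor
    · apply P.cof_of_llp
      intro X Y g hg
      rw [hrw]
      haveI := P.cof_llp j g hjc hg
      haveI := P.cof_llp _ g hacyc.1 hg
      infer_instance
    · intro X Y g hg h1 h2
      rw [hrw]
      haveI := P.anCof_llp j g hj hg
      haveI := hacyc.2 g hg h1 h2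
      infer_instance
  · -- AcyclicCof j
    exact ⟨hjc, fun g hg _ _ => P.anCof_llp j g hj hg⟩
  · -- the square
    rw [Category.assoc, hcr]
    apply pushout.hom_ext
    · rw [pushout.inl_desc_assoc, Category.id_comp, ← Category.assoc, hφinl, Category.assoc,
        pushout.inl_desc, Category.comp_id]
    · rw [pushout.inr_desc_assoc, Category.id_comp, ← Category.assoc, hφinr, Category.assoc,
        pushout.inr_desc, Category.comp_id]
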